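/- Define c : ℕ → ℝ by c 1 = √2 and c (n+1) = √(2 + c n) (real square roots). Then the sequence n ↦ 2^(n+1) · √(2 − c n) converges, and its limit equals π. -/

import Mathlib

open Filter Real

lemma sin_div_tendsto : Tendsto (fun x : ℝ => Real.sin x / x) (nhdsWithin 0 {0}ᶜ) (nhds 1) := by
  have h := (Real.hasDerivAt_sin 0)
  rw [Real.cos_zero] at h
  have := hasDerivAt_iff_tendsto_slope.mp h
  refine this.congr' ?_
  filter_upwards [self_mem_nhdsWithin] with x hx
  simp [slope, hx, div_eq_inv_mul]

lemma two_le_pow_real (k : ℕ) (hk : 1 ≤ k) : (2:ℝ) ≤ 2 ^ k := by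
  calc (2:ℝ) = 2 ^ 1 := (pow_one 2).symm
  _ ≤ 2 ^ k := pow_le_pow_right₀ (by norm_num) hk

/-- Catalan (1842): with `c 1 = √2` and `c (n+1) = √(2 + c n)`, the sequence
`2^(n+1) · √(2 − c n)` converges to `π`. -/
theorem catalan_pi_formula (c : ℕ → ℝ) (hc1 : c 1 = Real.sqrt 2)
    (hc : ∀ n, 1 ≤ n → c (n + 1) = Real.sqrt (2 + c n)) :
    Tendsto (fun n => (2 : ℝ) ^ (n + 1) * Real.sqrt (2 - c n)) atTop (nhds Real.pi) := by
  -- closed form: c n = 2 cos (π / 2^(n+1)) for n ≥ 1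
  have key : ∀ n, 1 ≤ n → c n = 2 * Real.cos (π / 2 ^ (n + 1)) := by
    intro n hn
    induction n with
    | zero => omega
    | succ m ih =>
      rcases Nat.eq_or_lt_of_le hn with h1 | h1
      · have : m = 0 := by omega
        subst this
        rw [hc1]
        norm_num [Real.cos_pi_div_four]
        ring
      · have hm : 1 ≤ m := by omega
        rw [hc m hm, ih hm]
        have hdouble : 2 * (π / 2 ^ (m + 1 + 1)) = π / 2 ^ (m + 1) := by
          rw [pow_succ]; field_simp
        have hcos : Real.cos (π / 2 ^ (m + 1 + 1)) ≥ 0 := by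
          apply Real.cos_nonneg_of_mem_Icc
          have hp : (0:ℝ) ≤ π / 2 ^ (m + 1 + 1) := by positivity
          have h2 : (2:ℝ) ≤ 2 ^ (m + 1 + 1) := two_le_pow_real _ (by omega)
          constructor
          · linarith [pi_div_two_pos.le]
          · rw [div_le_div_iff₀ (by positivity) (by norm_num)]
            nlinarith [pi_pos]
        have hc2 := Real.cos_two_mul (π / 2 ^ (m + 1 + 1))
        rw [hdouble] at hc2
        have hsq : 2 + 2 * Real.cos (π / 2 ^ (m + 1)) =
            (2 * Real.cos (π / 2 ^ (m + 1 + 1))) ^ 2 := by nlinarith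
        rw [hsq, Real.sqrt_sq (by linarith)]
  -- rewrite the term as 2^(n+2) * sin (π / 2^(n+2))
  have hterm : ∀ n, 1 ≤ n → (2 : ℝ) ^ (n + 1) * Real.sqrt (2 - c n) =
      2 ^ (n + 2) * Real.sin (π / 2 ^ (n + 2)) := by
    intro n hn
    rw [key n hn]
    have hdouble : 2 * (π / 2 ^ (n + 2)) = π / 2 ^ (n + 1) := by
      rw [pow_succ]; field_simp
    have hsin : Real.sin (π / 2 ^ (n + 2)) ≥ 0 := by
      apply Real.sin_nonneg_of_nonneg_of_le_pi
      · positivity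
      · have h2 : (2:ℝ) ≤ 2 ^ (n + 2) := two_le_pow_real _ (by omega)
        rw [div_le_iff₀ (by positivity)]
        nlinarith [pi_pos]
    have hc2 := Real.cos_two_mul (π / 2 ^ (n + 2))
    rw [hdouble] at hc2
    have hpyth := Real.sin_sq_add_cos_sq (π / 2 ^ (n + 2))
    have hsq : 2 - 2 * Real.cos (π / 2 ^ (n + 1)) =
        (2 * Real.sin (π / 2 ^ (n + 2))) ^ 2 := by nlinarith
    rw [hsq, Real.sqrt_sq (by linarith)]
    ring
  -- limit of 2^(n+2) * sin (π / 2^(n+2))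
  have hx : Tendsto (fun n : ℕ => π / 2 ^ (n + 2)) atTop (nhdsWithin 0 {0}ᶜ) := by
    apply tendsto_nhdsWithin_of_tendsto_nhds_of_eventually_within
    · have : Tendsto (fun n : ℕ => ((1:ℝ)/2) ^ (n + 2)) atTop (nhds 0) :=
        (tendsto_pow_atTop_nhds_zero_of_lt_one (by norm_num) (by norm_num)).comp
          (tendsto_add_atTop_nat 2)
      have := this.const_mul π
      simpa [div_eq_mul_inv, inv_pow, mul_comm] using this
    · filter_upwards with n
      have : (0:ℝ) < π / 2 ^ (n + 2) := by positivity
      simp [ne_of_gt this]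
  have hlim : Tendsto (fun n : ℕ => (2:ℝ) ^ (n + 2) * Real.sin (π / 2 ^ (n + 2)))
      atTop (nhds π) := by
    have := (sin_div_tendsto.comp hx).const_mul π
    rw [mul_one] at this
    refine this.congr ?_
    intro n
    have h2 : (2:ℝ) ^ (n + 2) ≠ 0 := by positivity
    have hπ : π ≠ 0 := pi_ne_zero
    rw [Function.comp_apply]
    field_simp
  refine hlim.congr' ?_
  filter_upwards [eventually_ge_atTop 1] with n hn
  exact (hterm n hn).symm
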